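/- Let 0 ≤ α < 1 and θ > 0, let (P^v)_{v∈ℕ*} be an i.i.d. family of random probability vectors whose common marginal distribution is that of a GEM(α, θ) stick-breaking sequence, and define Q := ∑_{m=1}^∞ ∑_{(i_1,…,i_m)∈ℕ^m} ∏_{j=1}^m (P^{(i_1,…,i_{j−1})}_{i_j})². Then E[Q] = (1 − α)/(θ + α). (For the parameters α = χ/(χ+ρ), θ = ρ/(χ+ρ) of the linear preferential attachment tree with weights w_k = χk + ρ, this value equals ρ/(χ + ρ).) -/

import Mathlib

open MeasureTheory ProbabilityTheory Finset
open scoped ENNReal NNReal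

/-- The Beta(a, b) distribution on ℝ (supported on `(0,1)`), with density
`Γ(a+b)/(Γ(a)Γ(b)) x^(a-1) (1-x)^(b-1)` with respect to Lebesgue measure. -/
noncomputable def betaMeasure (a b : ℝ) : Measure ℝ :=
  (volume.restrict (Set.Ioo (0 : ℝ) 1)).withDensity fun x =>
    ENNReal.ofReal
      (Real.Gamma (a + b) / (Real.Gamma a * Real.Gamma b) * x ^ (a - 1) * (1 - x) ^ (b - 1))

section AuxLemmas

lemma aux_iIndepFun_precomp {Ω ι κ : Type*} [MeasurableSpace Ω] {μ : Measure Ω}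
    {β : Type*} [mβ : MeasurableSpace β] {f : ι → Ω → β}
    (h : iIndepFun f μ) {g : κ → ι} (hg : Function.Injective g) :
    iIndepFun (fun k => f (g k)) μ := by
  classical
  rw [iIndepFun_iff_measure_inter_preimage_eq_mul] at h ⊢
  intro S sets hsets
  set sets' : ι → Set β := fun i =>
    ⋃ k ∈ S.filter (fun k => g k = i), sets k with hsets'
  have hkey : ∀ k ∈ S, sets' (g k) = sets k := by
    intro k hk
    have : S.filter (fun k' => g k' = g k) = {k} := by
      ext k'
      simp only [Finset.mem_filter, Finset.mem_singleton]
      constructor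
      · rintro ⟨_, h2⟩; exact hg h2
      · rintro rfl; exact ⟨hk, rfl⟩
    simp only [hsets']
    rw [this]
    simp
  have hmeas' : ∀ i, i ∈ S.image g → MeasurableSet (sets' i) := by
    intro i hi
    rw [Finset.mem_image] at hi
    obtain ⟨k, hk, rfl⟩ := hi
    rw [hkey k hk]; exact hsets k hk
  have := h (S.image g) hmeas'
  rw [Finset.set_biInter_finset_image, Finset.prod_image
    (fun a ha b hb hab => hg hab)] at this
  calc μ (⋂ k ∈ S, f (g k) ⁻¹' sets k)
      = μ (⋂ k ∈ S, f (g k) ⁻¹' sets' (g k)) := by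
        congr 1; exact Set.iInter₂_congr fun k hk => by rw [hkey k hk]
    _ = ∏ k ∈ S, μ (f (g k) ⁻¹' sets' (g k)) := this
    _ = ∏ k ∈ S, μ (f (g k) ⁻¹' sets k) :=
        Finset.prod_congr rfl fun k hk => by rw [hkey k hk]

lemma aux_lintegral_prod_iIndepFun {Ω ι : Type*} [MeasurableSpace Ω] {μ : Measure Ω}
    [IsProbabilityMeasure μ] {Y : ι → Ω → ℝ≥0∞} (hmeas : ∀ i, Measurable (Y i))
    (hindep : iIndepFun Y μ) (s : Finset ι) :
    ∫⁻ ω, ∏ i ∈ s, Y i ω ∂μ = ∏ i ∈ s, ∫⁻ ω, Y i ω ∂μ := by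
  classical
  induction s using Finset.induction with
  | empty => simp
  | insert _ _ hi _ =>
    rename_i a s ih
    have hindep2 : IndepFun (∏ j ∈ s, Y j) (Y a) μ :=
      hindep.indepFun_finsetProd_of_notMem hmeas hi
    have hprodmeas : Measurable (∏ j ∈ s, Y j) := by
      have := Finset.measurable_prod s fun j _ => hmeas j
      simpa only [← Finset.prod_apply] using this
    simp only [Finset.prod_insert hi]
    have : ∫⁻ ω, Y a ω * ∏ j ∈ s, Y j ω ∂μ
        = (∫⁻ ω, (∏ j ∈ s, Y j) ω ∂μ) * ∫⁻ ω, Y a ω ∂μ := by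
      rw [← lintegral_mul_eq_lintegral_mul_lintegral_of_indepFun hprodmeas (hmeas a) hindep2]
      congr 1; ext ω; simp [mul_comm]
    rw [this]
    simp only [Finset.prod_apply]
    rw [ih, mul_comm]

lemma aux_complex_eq_real_beta {a b : ℝ} :
    Set.EqOn (fun x : ℝ => (x : ℂ) ^ ((a : ℂ) - 1) * (1 - (x : ℂ)) ^ ((b : ℂ) - 1))
      (fun x : ℝ => ((x ^ (a - 1) * (1 - x) ^ (b - 1) : ℝ) : ℂ)) (Set.uIcc (0:ℝ) 1) := by
  intro x hx
  rw [Set.uIcc_of_le (by norm_num : (0:ℝ) ≤ 1)] at hx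
  obtain ⟨h0, h1⟩ := hx
  have e1 : ((x : ℂ)) ^ ((a : ℂ) - 1) = ((x ^ (a - 1) : ℝ) : ℂ) := by
    rw [Complex.ofReal_cpow h0]; push_cast; ring_nf
  have e2 : (1 - (x : ℂ)) ^ ((b : ℂ) - 1) = (((1 - x) ^ (b - 1) : ℝ) : ℂ) := by
    rw [show (1 - (x:ℂ)) = (((1 - x : ℝ)) : ℂ) by push_cast; ring,
      Complex.ofReal_cpow (by linarith)]
    push_cast; ring_nf
  simp only [e1, e2]
  push_cast; ring

lemma aux_real_betaIntegral {a b : ℝ} (ha : 0 < a) (hb : 0 < b) :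
    ∫ x in (0:ℝ)..1, x ^ (a - 1) * (1 - x) ^ (b - 1) =
      Real.Gamma a * Real.Gamma b / Real.Gamma (a + b) := by
  have key := Complex.Gamma_mul_Gamma_eq_betaIntegral (s := (a:ℂ)) (t := (b:ℂ))
    (by simpa using ha) (by simpa using hb)
  rw [Complex.betaIntegral] at key
  rw [intervalIntegral.integral_congr aux_complex_eq_real_beta] at key
  rw [intervalIntegral.integral_ofReal] at key
  have hab : Real.Gamma (a + b) ≠ 0 := (Real.Gamma_pos_of_pos (by linarith)).ne'
  have : ((Real.Gamma a * Real.Gamma b : ℝ) : ℂ)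
      = ((Real.Gamma (a + b) * ∫ x in (0:ℝ)..1, x ^ (a - 1) * (1 - x) ^ (b - 1) : ℝ) : ℂ) := by
    push_cast
    rw [← Complex.Gamma_ofReal, ← Complex.Gamma_ofReal, ← Complex.Gamma_ofReal] at *
    push_cast at key ⊢
    rw [key]
  have hr := Complex.ofReal_injective this
  field_simp at hr ⊢
  linarith [hr]

lemma aux_beta_integrableOn {a b : ℝ} (ha : 0 < a) (hb : 0 < b) :
    IntegrableOn (fun x : ℝ => x ^ (a - 1) * (1 - x) ^ (b - 1)) (Set.Ioo (0:ℝ) 1) := by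
  have hc := Complex.betaIntegral_convergent (u := (a:ℂ)) (v := (b:ℂ))
    (by simpa using ha) (by simpa using hb)
  rw [intervalIntegrable_iff_integrableOn_Ioc_of_le (by norm_num : (0:ℝ) ≤ 1)] at hc
  have heq : Set.EqOn (fun x : ℝ => (x : ℂ) ^ ((a : ℂ) - 1) * (1 - (x : ℂ)) ^ ((b : ℂ) - 1))
      (fun x : ℝ => ((x ^ (a - 1) * (1 - x) ^ (b - 1) : ℝ) : ℂ)) (Set.Ioc (0:ℝ) 1) := by
    intro x hx
    apply aux_complex_eq_real_beta
    rw [Set.uIcc_of_le (by norm_num : (0:ℝ) ≤ 1)]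
    exact ⟨hx.1.le, hx.2⟩
  have hc2 : IntegrableOn (fun x : ℝ => ((x ^ (a - 1) * (1 - x) ^ (b - 1) : ℝ) : ℂ))
      (Set.Ioc (0:ℝ) 1) := hc.congr_fun heq measurableSet_Ioc
  have h3 : IntegrableOn
      (fun x : ℝ => RCLike.re ((x ^ (a - 1) * (1 - x) ^ (b - 1) : ℝ) : ℂ)) (Set.Ioc (0:ℝ) 1) :=
    hc2.re
  simpa using h3.mono_set Set.Ioo_subset_Ioc_self

lemma aux_beta_core {a b : ℝ} (ha : 0 < a) (hb : 0 < b) :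
    ∫⁻ x in Set.Ioo (0:ℝ) 1, ENNReal.ofReal (x ^ (a - 1) * (1 - x) ^ (b - 1)) =
      ENNReal.ofReal (Real.Gamma a * Real.Gamma b / Real.Gamma (a + b)) := by
  rw [← MeasureTheory.ofReal_integral_eq_lintegral_ofReal (aux_beta_integrableOn ha hb)
    ((ae_restrict_iff' measurableSet_Ioo).2 (Filter.Eventually.of_forall fun x hx => by
      have h1 : (0:ℝ) < x := hx.1
      have h2 : (0:ℝ) < 1 - x := by linarith [hx.2]
      positivity))]
  congr 1
  rw [← MeasureTheory.integral_Ioc_eq_integral_Ioo,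
    ← intervalIntegral.integral_of_le (by norm_num : (0:ℝ) ≤ 1)]
  exact aux_real_betaIntegral ha hb

lemma aux_density_measurable (a b : ℝ) : Measurable fun x : ℝ =>
    ENNReal.ofReal
      (Real.Gamma (a + b) / (Real.Gamma a * Real.Gamma b) * x ^ (a - 1) * (1 - x) ^ (b - 1)) := by
  apply ENNReal.measurable_ofReal.comp
  apply Measurable.mul
  · exact (measurable_const.mul (measurable_id.pow measurable_const))
  · exact ((measurable_const.sub measurable_id).pow measurable_const)

lemma aux_beta_moment_sq {a b : ℝ} (ha : 0 < a) (hb : 0 < b) :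
    ∫⁻ x, (ENNReal.ofReal x) ^ 2 ∂_root_.betaMeasure a b =
      ENNReal.ofReal (a * (a + 1) / ((a + b) * (a + b + 1))) := by
  have hΓa := Real.Gamma_pos_of_pos ha
  have hΓb := Real.Gamma_pos_of_pos hb
  have hΓab := Real.Gamma_pos_of_pos (by linarith : 0 < a + b)
  set C : ℝ := Real.Gamma (a + b) / (Real.Gamma a * Real.Gamma b) with hC
  have hC0 : 0 ≤ C := by positivity
  have hg : Measurable fun x : ℝ => (ENNReal.ofReal x) ^ 2 :=
    ENNReal.measurable_ofReal.pow_const 2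
  rw [_root_.betaMeasure, MeasureTheory.lintegral_withDensity_eq_lintegral_mul _
    (aux_density_measurable a b) hg]
  have hcong : ∫⁻ x in Set.Ioo (0:ℝ) 1,
      (ENNReal.ofReal (C * x ^ (a - 1) * (1 - x) ^ (b - 1)) * (ENNReal.ofReal x) ^ 2) =
      ∫⁻ x in Set.Ioo (0:ℝ) 1,
        ENNReal.ofReal C * ENNReal.ofReal (x ^ (a + 2 - 1) * (1 - x) ^ (b - 1)) := by
    apply setLIntegral_congr_fun measurableSet_Ioo
    intro x hx
    beta_reduce
    have h1 : (0:ℝ) < x := hx.1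
    have h2 : (0:ℝ) < 1 - x := by linarith [hx.2]
    have e1 : (ENNReal.ofReal x) ^ 2 = ENNReal.ofReal (x ^ (2:ℝ)) := by
      rw [← ENNReal.ofReal_pow h1.le, ← Real.rpow_natCast x 2]; norm_num
    rw [e1, ← ENNReal.ofReal_mul (by positivity), ← ENNReal.ofReal_mul hC0]
    congr 1
    rw [show C * x ^ (a-1) * (1-x) ^ (b-1) * x ^ (2:ℝ)
        = C * (x ^ (a-1) * x ^ (2:ℝ) * (1-x) ^ (b-1)) from by ring,
      ← Real.rpow_add h1, show a - 1 + 2 = a + 2 - 1 from by ring]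
  simp only [Pi.mul_apply] at hcong ⊢
  rw [hcong, lintegral_const_mul' _ _ ENNReal.ofReal_ne_top,
    aux_beta_core (by linarith : (0:ℝ) < a + 2) hb,
    ← ENNReal.ofReal_mul hC0]
  congr 1
  have g1 : Real.Gamma (a + 2) = (a + 1) * a * Real.Gamma a := by
    rw [show a + 2 = (a + 1) + 1 by ring, Real.Gamma_add_one (by linarith),
      Real.Gamma_add_one ha.ne']
    ring
  have g2 : Real.Gamma (a + 2 + b) = (a + b + 1) * (a + b) * Real.Gamma (a + b) := by
    rw [show a + 2 + b = (a + b + 1) + 1 by ring, Real.Gamma_add_one (by linarith),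
      Real.Gamma_add_one (by linarith)]
    ring
  rw [hC, g1, g2]
  field_simp

lemma aux_beta_moment_sq' {a b : ℝ} (ha : 0 < a) (hb : 0 < b) :
    ∫⁻ x, (ENNReal.ofReal (1 - x)) ^ 2 ∂_root_.betaMeasure a b =
      ENNReal.ofReal (b * (b + 1) / ((a + b) * (a + b + 1))) := by
  have hΓa := Real.Gamma_pos_of_pos ha
  have hΓb := Real.Gamma_pos_of_pos hb
  have hΓab := Real.Gamma_pos_of_pos (by linarith : 0 < a + b)
  set C : ℝ := Real.Gamma (a + b) / (Real.Gamma a * Real.Gamma b) with hC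
  have hC0 : 0 ≤ C := by positivity
  have hg : Measurable fun x : ℝ => (ENNReal.ofReal (1 - x)) ^ 2 :=
    (ENNReal.measurable_ofReal.comp (measurable_const.sub measurable_id)).pow_const 2
  rw [_root_.betaMeasure, MeasureTheory.lintegral_withDensity_eq_lintegral_mul _
    (aux_density_measurable a b) hg]
  have hcong : ∫⁻ x in Set.Ioo (0:ℝ) 1,
      (ENNReal.ofReal (C * x ^ (a - 1) * (1 - x) ^ (b - 1)) * (ENNReal.ofReal (1 - x)) ^ 2) =
      ∫⁻ x in Set.Ioo (0:ℝ) 1,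
        ENNReal.ofReal C * ENNReal.ofReal (x ^ (a - 1) * (1 - x) ^ (b + 2 - 1)) := by
    apply setLIntegral_congr_fun measurableSet_Ioo
    intro x hx
    beta_reduce
    have h1 : (0:ℝ) < x := hx.1
    have h2 : (0:ℝ) < 1 - x := by linarith [hx.2]
    have e1 : (ENNReal.ofReal (1 - x)) ^ 2 = ENNReal.ofReal ((1 - x) ^ (2:ℝ)) := by
      rw [← ENNReal.ofReal_pow h2.le, ← Real.rpow_natCast (1 - x) 2]; norm_num
    rw [e1, ← ENNReal.ofReal_mul (by positivity), ← ENNReal.ofReal_mul hC0]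
    congr 1
    rw [show C * x ^ (a-1) * (1-x) ^ (b-1) * (1-x) ^ (2:ℝ)
        = C * (x ^ (a-1) * ((1-x) ^ (b-1) * (1-x) ^ (2:ℝ))) from by ring,
      ← Real.rpow_add h2, show b - 1 + 2 = b + 2 - 1 from by ring]
  simp only [Pi.mul_apply] at hcong ⊢
  rw [hcong, lintegral_const_mul' _ _ ENNReal.ofReal_ne_top,
    aux_beta_core ha (by linarith : (0:ℝ) < b + 2),
    ← ENNReal.ofReal_mul hC0]
  congr 1
  have g1 : Real.Gamma (b + 2) = (b + 1) * b * Real.Gamma b := by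
    rw [show b + 2 = (b + 1) + 1 by ring, Real.Gamma_add_one (by linarith),
      Real.Gamma_add_one hb.ne']
    ring
  have g2 : Real.Gamma (a + (b + 2)) = (a + b + 1) * (a + b) * Real.Gamma (a + b) := by
    rw [show a + (b + 2) = (a + b + 1) + 1 by ring, Real.Gamma_add_one (by linarith),
      Real.Gamma_add_one (by linarith)]
    ring
  rw [hC, g1, g2]
  field_simp

lemma aux_GEM_hasSum {α θ : ℝ} (hα0 : 0 ≤ α) (hα1 : α < 1) (hθ : 0 < θ) :
    HasSum (fun k : ℕ =>
      ((1-α) * ((1-α)+1) / (((1-α) + (θ+((k:ℝ)+1)*α)) * ((1-α) + (θ+((k:ℝ)+1)*α) + 1))) *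
        ∏ j ∈ Finset.range k,
          ((θ+((j:ℝ)+1)*α) * ((θ+((j:ℝ)+1)*α)+1) /
            (((1-α) + (θ+((j:ℝ)+1)*α)) * ((1-α) + (θ+((j:ℝ)+1)*α) + 1))))
      ((1 - α) / (1 + θ)) := by
  set A : ℕ → ℝ := fun k =>
    (1-α) * ((1-α)+1) / (((1-α) + (θ+((k:ℝ)+1)*α)) * ((1-α) + (θ+((k:ℝ)+1)*α) + 1)) with hA
  set B : ℕ → ℝ := fun j =>
    (θ+((j:ℝ)+1)*α) * ((θ+((j:ℝ)+1)*α)+1) /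
      (((1-α) + (θ+((j:ℝ)+1)*α)) * ((1-α) + (θ+((j:ℝ)+1)*α) + 1)) with hB
  suffices h : HasSum (fun k => A k * ∏ j ∈ Finset.range k, B j) ((1 - α) / (1 + θ)) by
    exact h
  have hα1' : (0:ℝ) < 1 - α := by linarith
  have hd1 : ∀ k : ℕ, (0:ℝ) < 1 + θ + (k:ℝ) * α := fun k => by positivity
  have hd2 : ∀ k : ℕ, (0:ℝ) < 2 + θ + (k:ℝ) * α := fun k => by positivity
  have hsum : ∀ k : ℕ, (1-α) + (θ+((k:ℝ)+1)*α) = 1 + θ + (k:ℝ) * α := fun k => by ring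
  have hsum1 : ∀ k : ℕ, (1-α) + (θ+((k:ℝ)+1)*α) + 1 = 2 + θ + (k:ℝ) * α := fun k => by ring
  have hBnn : ∀ j, 0 ≤ B j := by
    intro j
    rw [hB]
    simp only
    rw [hsum j]
    have h1 := hd1 j; have h2 := hd2 j
    have h3 : (0:ℝ) ≤ θ + ((j:ℝ)+1)*α := by positivity
    have h4 : (0:ℝ) ≤ θ + ((j:ℝ)+1)*α + 1 := by positivity
    positivity
  have hAnn : ∀ k, 0 ≤ A k := by
    intro k
    rw [hA]
    simp only
    rw [hsum k]
    have h1 := hd1 k; have h2 := hd2 k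
    positivity
  set f : ℕ → ℝ := fun k => (1 - α) / (1 + θ + (k:ℝ) * α) with hf
  set g : ℕ → ℝ := fun k => f k * ∏ j ∈ Finset.range k, B j with hg
  have htel : ∀ k : ℕ, A k * ∏ j ∈ Finset.range k, B j = g k - g (k+1) := by
    intro k
    rw [hg]
    simp only [Finset.prod_range_succ]
    have key : A k = f k - f (k+1) * B k := by
      rw [hA, hf, hB]
      simp only
      rw [hsum k]
      have h1 := hd1 k; have h2 := hd2 k; have h3 := hd1 (k+1)
      push_cast at h3 ⊢
      have h4 : (1:ℝ) + θ + ((k:ℝ)+1) * α ≠ 0 := by positivity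
      have h5 : (1:ℝ) + θ + (k:ℝ) * α ≠ 0 := h1.ne'
      have h6 : (1:ℝ) + θ + (k:ℝ) * α + 1 ≠ 0 := by positivity
      field_simp
      ring
    rw [key]
    push_cast
    ring
  have hpart : ∀ n : ℕ, ∑ k ∈ Finset.range n, A k * ∏ j ∈ Finset.range k, B j
      = (1 - α) / (1 + θ) - g n := by
    intro n
    calc ∑ k ∈ Finset.range n, A k * ∏ j ∈ Finset.range k, B j
        = ∑ k ∈ Finset.range n, (g k - g (k+1)) := Finset.sum_congr rfl fun k _ => htel k
      _ = g 0 - g n := Finset.sum_range_sub' g n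
      _ = (1 - α) / (1 + θ) - g n := by
          rw [hg, hf]; norm_num
  set K : ℝ := 2 * (1 - α) / (2 + θ + α) with hK
  have hK0 : 0 < K := by rw [hK]; positivity
  have hBle : ∀ j : ℕ, B j ≤ Real.exp (-(K / ((j:ℝ) + 1))) := by
    intro j
    have h1 := hd1 j; have h2 := hd2 j
    have hj1 : (0:ℝ) < (j:ℝ) + 1 := by positivity
    have step1 : B j ≤ 1 - K / ((j:ℝ) + 1) := by
      have hKj : K / ((j:ℝ)+1) ≤ 2 * (1 - α) / (2 + θ + (j:ℝ) * α) := by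
        rw [hK, div_div]
        rw [div_le_div_iff₀ (by positivity) h2]
        have hfact : (0:ℝ) ≤ (1 - α) * ((2+θ) * (j:ℝ) + α) := by
          apply mul_nonneg hα1'.le
          have := (Nat.cast_nonneg j : (0:ℝ) ≤ (j:ℝ))
          nlinarith
        nlinarith
      have hB2 : B j ≤ 1 - 2 * (1 - α) / (2 + θ + (j:ℝ) * α) := by
        rw [hB]
        simp only
        rw [hsum j]
        rw [div_le_iff₀ (by positivity)]
        have expand : (1 - 2 * (1 - α) / (2 + θ + (j:ℝ) * α)) *
            ((1 + θ + (j:ℝ)*α) * (1 + θ + (j:ℝ)*α + 1))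
            = (1 + θ + (j:ℝ)*α) * (1 + θ + (j:ℝ)*α + 1) - 2*(1-α)*(1 + θ + (j:ℝ)*α) := by
          field_simp
          ring
        rw [expand]
        nlinarith [mul_nonneg hα1'.le hα0]
      linarith
    calc B j ≤ 1 - K / ((j:ℝ)+1) := step1
      _ ≤ Real.exp (-(K / ((j:ℝ)+1))) := by
          have := Real.add_one_le_exp (-(K / ((j:ℝ)+1)))
          linarith
  have hTnn : ∀ n : ℕ, 0 ≤ ∏ j ∈ Finset.range n, B j :=
    fun n => Finset.prod_nonneg fun j _ => hBnn j
  have hTle : ∀ n : ℕ, ∏ j ∈ Finset.range n, B j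
      ≤ Real.exp (-(K * ∑ j ∈ Finset.range n, 1 / ((j:ℝ) + 1))) := by
    intro n
    calc ∏ j ∈ Finset.range n, B j
        ≤ ∏ j ∈ Finset.range n, Real.exp (-(K / ((j:ℝ) + 1))) :=
          Finset.prod_le_prod (fun j _ => hBnn j) (fun j _ => hBle j)
      _ = Real.exp (∑ j ∈ Finset.range n, -(K / ((j:ℝ) + 1))) := by rw [Real.exp_sum]
      _ = Real.exp (-(K * ∑ j ∈ Finset.range n, 1 / ((j:ℝ) + 1))) := by
          congr 1
          rw [Finset.mul_sum, ← Finset.sum_neg_distrib]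
          exact Finset.sum_congr rfl fun j _ => by rw [mul_one_div]

  have hharm : Filter.Tendsto (fun n : ℕ => ∑ j ∈ Finset.range n, 1 / ((j:ℝ) + 1))
      Filter.atTop Filter.atTop := by
    exact Real.tendsto_sum_range_one_div_nat_succ_atTop
  have hexp0 : Filter.Tendsto
      (fun n : ℕ => Real.exp (-(K * ∑ j ∈ Finset.range n, 1 / ((j:ℝ) + 1))))
      Filter.atTop (nhds 0) := by
    apply Real.tendsto_exp_atBot.comp
    apply Filter.tendsto_neg_atTop_atBot.comp
    exact hharm.const_mul_atTop hK0
  have hT0 : Filter.Tendsto (fun n => ∏ j ∈ Finset.range n, B j) Filter.atTop (nhds 0) :=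
    squeeze_zero hTnn hTle hexp0
  have hg0 : Filter.Tendsto g Filter.atTop (nhds 0) := by
    have hgnn : ∀ n, 0 ≤ g n := by
      intro n
      rw [hg, hf]
      exact mul_nonneg (div_nonneg hα1'.le (hd1 n).le) (hTnn n)
    have hgle : ∀ n, g n ≤ ((1 - α) / (1 + θ)) * ∏ j ∈ Finset.range n, B j := by
      intro n
      rw [hg, hf]
      apply mul_le_mul_of_nonneg_right _ (hTnn n)
      apply div_le_div_of_nonneg_left hα1'.le (by positivity)
      · nlinarith [(Nat.cast_nonneg n : (0:ℝ) ≤ (n:ℝ)), hα0]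
    have hlim : Filter.Tendsto (fun n => ((1 - α) / (1 + θ)) * ∏ j ∈ Finset.range n, B j)
        Filter.atTop (nhds 0) := by
      have := hT0.const_mul ((1 - α) / (1 + θ))
      simpa using this
    exact squeeze_zero hgnn hgle hlim
  rw [hasSum_iff_tendsto_nat_of_nonneg (fun k => mul_nonneg (hAnn k) (hTnn k))]
  have : (fun n : ℕ => ∑ k ∈ Finset.range n, A k * ∏ j ∈ Finset.range k, B j)
      = fun n => (1 - α) / (1 + θ) - g n := funext hpart
  rw [this]
  simpa using hg0.const_sub ((1 - α) / (1 + θ))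

lemma aux_tsum_pi_prod (e : ℕ → ℝ≥0∞) : ∀ n : ℕ,
    ∑' (i : Fin n → ℕ), ∏ j, e (i j) = (∑' k, e k) ^ n := by
  intro n
  induction n with
  | zero =>
    simp only [pow_zero, Finset.univ_eq_empty, Finset.prod_empty]
    exact tsum_eq_single (fun (j : Fin 0) => 0) fun b hb =>
      (hb (funext fun j => j.elim0)).elim
  | succ n ih =>
    rw [← (Fin.consEquiv fun _ => ℕ).tsum_eq (fun i : Fin (n+1) → ℕ => ∏ j, e (i j))]
    rw [ENNReal.tsum_prod']
    have : ∀ (a : ℕ) (b : Fin n → ℕ),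
        ∏ j, e (((Fin.consEquiv fun _ => ℕ) (a, b)) j) = e a * ∏ j, e (b j) := by
      intro a b
      rw [Fin.prod_univ_succ]
      simp [Fin.consEquiv]
    simp_rw [this]
    simp_rw [ENNReal.tsum_mul_left, ih, ENNReal.tsum_mul_right]
    rw [← pow_succ']

end AuxLemmas

theorem stmt16_mean_Q_for_GEM {Ω : Type*} [MeasurableSpace Ω]
    (μ : Measure Ω) [IsProbabilityMeasure μ] (α θ : ℝ)
    (hα0 : 0 ≤ α) (hα1 : α < 1) (hθ : 0 < θ)
    (P : List ℕ → Ω → ℕ → ℝ)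
    (hPmeas : ∀ v, Measurable (P v))
    (hiid : iIndepFun P μ)
    {Ω' : Type*} [MeasurableSpace Ω'] (μ' : Measure Ω') [IsProbabilityMeasure μ']
    (Z : ℕ → Ω' → ℝ)
    (hZmeas : ∀ j, Measurable (Z j))
    (hZrange : ∀ j, ∀ ω, Z j ω ∈ Set.Icc (0 : ℝ) 1)
    (hZindep : iIndepFun Z μ')
    (hZlaw : ∀ j : ℕ, Measure.map (Z j) μ' = _root_.betaMeasure (1 - α) (θ + (j + 1) * α))
    (hmarginal : ∀ v : List ℕ,
      Measure.map (P v) μ =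
        Measure.map (fun ω (i : ℕ) => Z i ω * ∏ j ∈ Finset.range i, (1 - Z j ω)) μ')
    (Q : Ω → ℝ≥0∞)
    (hQ : Q = fun ω => ∑' (m : ℕ), ∑' (i : Fin (m + 1) → ℕ),
      ∏ j : Fin (m + 1),
        (ENNReal.ofReal
          (P (List.ofFn fun t : Fin j.1 => i (Fin.castLE j.2.le t)) ω (i j))) ^ 2) :
    ∫⁻ ω, Q ω ∂μ = ENNReal.ofReal ((1 - α) / (θ + α)) := by
  classical
  have hα1' : (0:ℝ) < 1 - α := by linarith
  have hb0 : ∀ j : ℕ, (0:ℝ) < θ + ((j:ℝ) + 1) * α := fun j => by positivity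
  -- the Beta second moments transported to the Z variables
  have hZm1 : ∀ k : ℕ, ∫⁻ ω', (ENNReal.ofReal (Z k ω')) ^ 2 ∂μ'
      = ENNReal.ofReal ((1-α) * ((1-α)+1) /
          (((1-α) + (θ+((k:ℝ)+1)*α)) * ((1-α) + (θ+((k:ℝ)+1)*α) + 1))) := by
    intro k
    have hm : Measurable fun x : ℝ => (ENNReal.ofReal x) ^ 2 :=
      ENNReal.measurable_ofReal.pow_const 2
    rw [← lintegral_map hm (hZmeas k), hZlaw k]
    exact aux_beta_moment_sq hα1' (hb0 k)
  have hZm2 : ∀ k : ℕ, ∫⁻ ω', (ENNReal.ofReal (1 - Z k ω')) ^ 2 ∂μ'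
      = ENNReal.ofReal ((θ+((k:ℝ)+1)*α) * ((θ+((k:ℝ)+1)*α)+1) /
          (((1-α) + (θ+((k:ℝ)+1)*α)) * ((1-α) + (θ+((k:ℝ)+1)*α) + 1))) := by
    intro k
    have hm : Measurable fun x : ℝ => (ENNReal.ofReal (1 - x)) ^ 2 :=
      (ENNReal.measurable_ofReal.comp (measurable_const.sub measurable_id)).pow_const 2
    rw [← lintegral_map hm (hZmeas k), hZlaw k]
    exact aux_beta_moment_sq' hα1' (hb0 k)
  -- notation for the moments
  set A : ℕ → ℝ := fun k =>
    (1-α) * ((1-α)+1) / (((1-α) + (θ+((k:ℝ)+1)*α)) * ((1-α) + (θ+((k:ℝ)+1)*α) + 1)) with hAdef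
  set B : ℕ → ℝ := fun j =>
    (θ+((j:ℝ)+1)*α) * ((θ+((j:ℝ)+1)*α)+1) /
      (((1-α) + (θ+((j:ℝ)+1)*α)) * ((1-α) + (θ+((j:ℝ)+1)*α) + 1)) with hBdef
  have hden : ∀ t : ℕ, (0:ℝ) < (1-α) + (θ+((t:ℝ)+1)*α) := by
    intro t
    have := (Nat.cast_nonneg t : (0:ℝ) ≤ (t:ℝ))
    nlinarith
  have hAnn : ∀ k, 0 ≤ A k := by
    intro k
    apply div_nonneg (by nlinarith)
    have h1 := hden k
    nlinarith
  have hBnn : ∀ k, 0 ≤ B k := by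
    intro k
    apply div_nonneg (by positivity)
    have h1 := hden k
    nlinarith
  -- the stick-breaking map and the second moment of each coordinate
  set stick : Ω' → ℕ → ℝ := fun ω' i => Z i ω' * ∏ j ∈ Finset.range i, (1 - Z j ω') with hstickdef
  have hstickmeas : Measurable stick := by
    apply measurable_pi_lambda
    intro n
    exact (hZmeas n).mul (by
      have := Finset.measurable_prod (Finset.range n)
        (fun t (_ : t ∈ Finset.range n) => (measurable_const.sub (hZmeas t) :
          Measurable fun ω' => (1:ℝ) - Z t ω'))
      exact this)
  set sZ : ℕ → ℝ≥0∞ := fun k =>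
    ∫⁻ ω', (ENNReal.ofReal (stick ω' k)) ^ 2 ∂μ' with hsZdef
  have hsZ : ∀ k : ℕ, sZ k = ENNReal.ofReal (A k * ∏ t ∈ Finset.range k, B t) := by
    intro k
    -- family of factor functions
    set g : ℕ → ℝ → ℝ≥0∞ := fun t => if t = k
      then (fun x => (ENNReal.ofReal x) ^ 2)
      else (fun x => (ENNReal.ofReal (1 - x)) ^ 2) with hgdef
    have hgmeas : ∀ t, Measurable (g t) := by
      intro t
      rw [hgdef]
      by_cases h : t = k
      · simp only [h, if_pos rfl]
        exact ENNReal.measurable_ofReal.pow_const 2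
      · simp only [if_neg h]
        exact (ENNReal.measurable_ofReal.comp (measurable_const.sub measurable_id)).pow_const 2
    set W : ℕ → Ω' → ℝ≥0∞ := fun t => (g t) ∘ (Z t) with hWdef
    have hWmeas : ∀ t, Measurable (W t) := fun t => (hgmeas t).comp (hZmeas t)
    have hWindep : iIndepFun W μ' := hZindep.comp g hgmeas
    have hpoint : ∀ ω', (ENNReal.ofReal (stick ω' k)) ^ 2
        = ∏ t ∈ Finset.range (k+1), W t ω' := by
      intro ω'
      have hZ0 : (0:ℝ) ≤ Z k ω' := (hZrange k ω').1
      have hprod0 : ∀ t, (0:ℝ) ≤ 1 - Z t ω' := fun t => by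
        have := (hZrange t ω').2; linarith
      rw [hstickdef]
      simp only
      rw [ENNReal.ofReal_mul hZ0, ENNReal.ofReal_prod_of_nonneg (fun t _ => hprod0 t),
        mul_pow, ← Finset.prod_pow]
      rw [Finset.range_add_one, Finset.prod_insert Finset.notMem_range_self]
      congr 1
      · rw [hWdef]; simp [hgdef]
      · apply Finset.prod_congr rfl
        intro t ht
        have htk : t ≠ k := Nat.ne_of_lt (Finset.mem_range.mp ht)
        rw [hWdef]
        simp [hgdef, htk]
    have : sZ k = ∫⁻ ω', ∏ t ∈ Finset.range (k+1), W t ω' ∂μ' := by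
      rw [hsZdef]
      exact lintegral_congr fun ω' => hpoint ω'
    rw [this, aux_lintegral_prod_iIndepFun hWmeas hWindep (Finset.range (k+1)),
      Finset.range_add_one, Finset.prod_insert Finset.notMem_range_self]
    have hWk : ∫⁻ ω', W k ω' ∂μ' = ENNReal.ofReal (A k) := by
      have : W k = fun ω' => (ENNReal.ofReal (Z k ω')) ^ 2 := by
        rw [hWdef]; funext ω'; simp [hgdef]
      rw [this, hZm1 k, hAdef]
    have hWt : ∀ t, t ∈ Finset.range k → ∫⁻ ω', W t ω' ∂μ' = ENNReal.ofReal (B t) := by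
      intro t ht
      have htk : t ≠ k := Nat.ne_of_lt (Finset.mem_range.mp ht)
      have : W t = fun ω' => (ENNReal.ofReal (1 - Z t ω')) ^ 2 := by
        rw [hWdef]; funext ω'; simp [hgdef, htk]
      rw [this, hZm2 t, hBdef]
    rw [hWk, Finset.prod_congr rfl hWt, ← ENNReal.ofReal_prod_of_nonneg (fun t _ => hBnn t),
      ← ENNReal.ofReal_mul (hAnn k)]
  -- sum of the coordinate second moments
  have hsumZ : ∑' k, sZ k = ENNReal.ofReal ((1 - α) / (1 + θ)) := by
    have hs := aux_GEM_hasSum hα0 hα1 hθ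
    have hnn : ∀ k : ℕ, 0 ≤ A k * ∏ t ∈ Finset.range k, B t :=
      fun k => mul_nonneg (hAnn k) (Finset.prod_nonneg fun t _ => hBnn t)
    calc ∑' k, sZ k = ∑' k, ENNReal.ofReal (A k * ∏ t ∈ Finset.range k, B t) :=
          tsum_congr hsZ
      _ = ENNReal.ofReal (∑' k, A k * ∏ t ∈ Finset.range k, B t) :=
          (ENNReal.ofReal_tsum_of_nonneg hnn hs.summable).symm
      _ = ENNReal.ofReal ((1 - α) / (1 + θ)) := by rw [hs.tsum_eq]
  -- second moment of a single coordinate of P equals sZ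
  have hPmom : ∀ (v : List ℕ) (n : ℕ),
      ∫⁻ ω, (ENNReal.ofReal (P v ω n)) ^ 2 ∂μ = sZ n := by
    intro v n
    have hgm : Measurable fun p : ℕ → ℝ => (ENNReal.ofReal (p n)) ^ 2 :=
      (ENNReal.measurable_ofReal.comp (measurable_pi_apply n)).pow_const 2
    rw [← lintegral_map hgm (hPmeas v), hmarginal v, lintegral_map hgm hstickmeas, hsZdef]
  -- the inner integral for a fixed tuple
  have hFval : ∀ (m : ℕ) (i : Fin (m+1) → ℕ),
      ∫⁻ ω, ∏ j : Fin (m+1),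
        (ENNReal.ofReal
          (P (List.ofFn fun t : Fin j.1 => i (Fin.castLE j.2.le t)) ω (i j))) ^ 2 ∂μ
      = ∏ j : Fin (m+1), sZ (i j) := by
    intro m i
    set v : Fin (m+1) → List ℕ :=
      fun j => List.ofFn fun t : Fin j.1 => i (Fin.castLE j.2.le t) with hvdef
    have hvinj : Function.Injective v := by
      intro j j' h
      have := congrArg List.length h
      simp only [hvdef, List.length_ofFn] at this
      exact Fin.ext this
    have hP' : iIndepFun (fun j => P (v j)) μ :=
      aux_iIndepFun_precomp hiid hvinj
    set gg : Fin (m+1) → (ℕ → ℝ) → ℝ≥0∞ :=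
      fun j p => (ENNReal.ofReal (p (i j))) ^ 2 with hggdef
    have hggmeas : ∀ j, Measurable (gg j) := fun j =>
      (ENNReal.measurable_ofReal.comp (measurable_pi_apply (i j))).pow_const 2
    have hYindep : iIndepFun (fun j => (gg j) ∘ (P (v j))) μ :=
      hP'.comp gg hggmeas
    have hYmeas : ∀ j, Measurable ((gg j) ∘ (P (v j))) := fun j =>
      (hggmeas j).comp (hPmeas (v j))
    have := aux_lintegral_prod_iIndepFun hYmeas hYindep Finset.univ
    calc ∫⁻ ω, ∏ j : Fin (m+1),
          (ENNReal.ofReal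
            (P (List.ofFn fun t : Fin j.1 => i (Fin.castLE j.2.le t)) ω (i j))) ^ 2 ∂μ
        = ∫⁻ ω, ∏ j : Fin (m+1), ((gg j) ∘ (P (v j))) ω ∂μ := rfl
      _ = ∏ j : Fin (m+1), ∫⁻ ω, ((gg j) ∘ (P (v j))) ω ∂μ := this
      _ = ∏ j : Fin (m+1), sZ (i j) := by
          apply Finset.prod_congr rfl
          intro j _
          exact hPmom (v j) (i j)
  -- measurability for Tonelli
  have hFmeas : ∀ (m : ℕ) (i : Fin (m+1) → ℕ),
      Measurable fun ω => ∏ j : Fin (m+1),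
        (ENNReal.ofReal
          (P (List.ofFn fun t : Fin j.1 => i (Fin.castLE j.2.le t)) ω (i j))) ^ 2 := by
    intro m i
    have := Finset.measurable_prod (Finset.univ : Finset (Fin (m+1)))
      (fun j _ => ((ENNReal.measurable_ofReal.comp
        ((measurable_pi_apply (i j)).comp
          (hPmeas (List.ofFn fun t : Fin j.1 => i (Fin.castLE j.2.le t))))).pow_const 2 :
        Measurable fun ω =>
          (ENNReal.ofReal
            (P (List.ofFn fun t : Fin j.1 => i (Fin.castLE j.2.le t)) ω (i j))) ^ 2))
    exact this
  -- put everything together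
  rw [hQ]
  rw [lintegral_tsum (fun m => (Measurable.ennreal_tsum fun i => hFmeas m i).aemeasurable)]
  have : ∀ m : ℕ, ∫⁻ ω, ∑' (i : Fin (m + 1) → ℕ),
      ∏ j : Fin (m + 1),
        (ENNReal.ofReal
          (P (List.ofFn fun t : Fin j.1 => i (Fin.castLE j.2.le t)) ω (i j))) ^ 2 ∂μ
      = (∑' k, sZ k) ^ (m+1) := by
    intro m
    rw [lintegral_tsum (fun i => (hFmeas m i).aemeasurable)]
    calc ∑' (i : Fin (m+1) → ℕ), ∫⁻ ω, ∏ j : Fin (m+1),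
          (ENNReal.ofReal
            (P (List.ofFn fun t : Fin j.1 => i (Fin.castLE j.2.le t)) ω (i j))) ^ 2 ∂μ
        = ∑' (i : Fin (m+1) → ℕ), ∏ j : Fin (m+1), sZ (i j) := tsum_congr fun i => hFval m i
      _ = (∑' k, sZ k) ^ (m+1) := aux_tsum_pi_prod sZ (m+1)
  rw [tsum_congr this]
  rw [hsumZ]
  -- geometric series
  set c : ℝ≥0∞ := ENNReal.ofReal ((1 - α) / (1 + θ)) with hc
  have hgeom : ∑' (m : ℕ), c ^ (m+1) = c * (1 - c)⁻¹ := by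
    calc ∑' (m : ℕ), c ^ (m+1) = ∑' (m : ℕ), c * c ^ m := by
          apply tsum_congr; intro m; rw [pow_succ']
      _ = c * ∑' (m : ℕ), c ^ m := ENNReal.tsum_mul_left
      _ = c * (1 - c)⁻¹ := by rw [ENNReal.tsum_geometric]
  rw [hgeom]
  -- final arithmetic
  have hS0 : (0:ℝ) ≤ (1 - α) / (1 + θ) := by positivity
  have h1S : (0:ℝ) < 1 - (1 - α) / (1 + θ) := by
    have h1θ : (0:ℝ) < 1 + θ := by linarith
    have hlt : (1 - α) / (1 + θ) < 1 := by
      rw [div_lt_one h1θ]; linarith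
    linarith
  have hc1 : 1 - c = ENNReal.ofReal (1 - (1 - α) / (1 + θ)) := by
    rw [hc, ENNReal.ofReal_sub _ hS0, ENNReal.ofReal_one]
  rw [hc1, ← ENNReal.ofReal_inv_of_pos h1S, hc, ← ENNReal.ofReal_mul hS0]
  congr 1
  have h1θ : (0:ℝ) < 1 + θ := by linarith
  have hθα : (0:ℝ) < θ + α := by linarith
  field_simp
  rw [show 1 + θ - (1 - α) = θ + α by ring, div_self hθα.ne']
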